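/- arXiv:1905.08127 — 2 statements merged into one kernel-verified Lean document; each statement's English description precedes it below -/
import Mathlib

section
/- Let V be a finite nonempty type, w : V → V → ℕ∞, q : ℕ with q ≥ 1, and let w_q be the augmented graph on V ⊕ Bool. Then rad_w ≥ 2q if and only if every vertex p : V ⊕ Bool satisfies ecc_{w_q}(p) = 2q (in particular, in that case the radius and the diameter of the augmented graph are equal). -/
/-- Weight of a walk starting at `u` and visiting the vertices of `p` in order. -/
def walkWeight {V : Type*} (w : V → V → ℕ∞) : V → List V → ℕ∞
  | _, [] => 0
  | u, x :: xs => w u x + walkWeight w x xs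

/-- Shortest-path distance: infimum of weights of walks from `u` to `v`. -/
noncomputable def gdist {V : Type*} (w : V → V → ℕ∞) (u v : V) : ℕ∞ :=
  ⨅ (p : List V) (_ : (u :: p).getLast (List.cons_ne_nil u p) = v), walkWeight w u p

/-- Eccentricity of a vertex. -/
noncomputable def ecc {V : Type*} (w : V → V → ℕ∞) (v : V) : ℕ∞ :=
  ⨆ u, gdist w v u

/-- Radius. -/
noncomputable def rad {V : Type*} (w : V → V → ℕ∞) : ℕ∞ :=
  ⨅ v, ecc w v

/-- Diameter. -/
noncomputable def diam {V : Type*} (w : V → V → ℕ∞) : ℕ∞ :=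
  ⨆ v, ecc w v

/-- Augmented graph on `V ⊕ Bool`: two extra vertices `x = inr false`, `y = inr true`
connected to every original vertex (in both directions) by edges of weight `q`. -/
def aug {V : Type*} (w : V → V → ℕ∞) (q : ℕ) : V ⊕ Bool → V ⊕ Bool → ℕ∞
  | Sum.inl u, Sum.inl v => w u v
  | Sum.inl _, Sum.inr _ => (q : ℕ∞)
  | Sum.inr _, Sum.inl _ => (q : ℕ∞)
  | Sum.inr _, Sum.inr _ => ⊤

open Sum

section Aux

variable {V : Type*} (w : V → V → ℕ∞) (q : ℕ)

-- A: nonempty walk starting at an `inr` vertex costs at least q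
lemma walk_from_inr {b : Bool} {p : List (V ⊕ Bool)} (hp : p ≠ []) :
    (q : ℕ∞) ≤ walkWeight (aug w q) (inr b) p := by
  obtain ⟨c, cs, rfl⟩ := List.exists_cons_of_ne_nil hp
  show (q : ℕ∞) ≤ aug w q (inr b) c + _
  cases c with
  | inl x => exact le_self_add
  | inr b' => simp [aug]

-- B: walk ending at an `inr` vertex costs at least q
lemma walk_to_inr {b : Bool} : ∀ (p : List (V ⊕ Bool)) (u : V ⊕ Bool), p ≠ [] →
    (u :: p).getLast (List.cons_ne_nil u p) = inr b →
    (q : ℕ∞) ≤ walkWeight (aug w q) u p := by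
  intro p
  induction p with
  | nil => intro u h; exact absurd rfl h
  | cons c cs ih =>
    intro u _ hlast
    rw [List.getLast_cons (List.cons_ne_nil c cs)] at hlast
    rcases eq_or_ne cs [] with rfl | hcs
    · simp only [List.getLast_singleton] at hlast
      subst hlast
      show (q : ℕ∞) ≤ aug w q u (inr b) + _
      cases u with
      | inl x => exact le_self_add
      | inr b' => simp [aug]
    · calc (q : ℕ∞) ≤ walkWeight (aug w q) c cs := ih c hcs hlast
        _ ≤ aug w q u c + walkWeight (aug w q) c cs := le_add_self

lemma gdist_le {V' : Type*} (w' : V' → V' → ℕ∞) {u v : V'} (p : List V')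
    (h : (u :: p).getLast (List.cons_ne_nil u p) = v) :
    gdist w' u v ≤ walkWeight w' u p :=
  iInf_le_of_le p (iInf_le _ h)

lemma le_gdist {V' : Type*} (w' : V' → V' → ℕ∞) {u v : V'} {c : ℕ∞}
    (H : ∀ p (_ : (u :: p).getLast (List.cons_ne_nil u p) = v), c ≤ walkWeight w' u p) :
    c ≤ gdist w' u v :=
  le_iInf fun p => le_iInf (H p)

-- C: distance between the two distinct inr vertices is ≥ 2q
lemma gdist_inr_inr_ge {b b' : Bool} (hbb : b ≠ b') :
    2 * (q : ℕ∞) ≤ gdist (aug w q) (inr b) (inr b' : V ⊕ Bool) := by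
  apply le_gdist
  intro p hp
  rcases eq_or_ne p [] with rfl | hpne
  · simp only [List.getLast_singleton] at hp
    exact absurd (inr.inj hp) hbb
  obtain ⟨c, cs, rfl⟩ := List.exists_cons_of_ne_nil hpne
  rw [List.getLast_cons (List.cons_ne_nil c cs)] at hp
  show 2 * (q : ℕ∞) ≤ aug w q (inr b) c + walkWeight (aug w q) c cs
  cases c with
  | inr b'' => simp [aug]
  | inl x =>
    have hcs : cs ≠ [] := by
      rintro rfl
      simp only [List.getLast_singleton] at hp
      exact absurd hp (by simp)
    have := walk_to_inr w q cs (inl x) hcs hp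
    calc 2 * (q : ℕ∞) = q + q := two_mul _
      _ ≤ (q : ℕ∞) + walkWeight (aug w q) (inl x) cs := add_le_add le_rfl this
      _ = aug w q (inr b) (inl x) + walkWeight (aug w q) (inl x) cs := rfl

lemma gdist_self' {V' : Type*} (w' : V' → V' → ℕ∞) (v : V') : gdist w' v v = 0 :=
  le_antisymm (by simpa [walkWeight] using gdist_le w' (u := v) (v := v) [] rfl) (zero_le)

lemma exists_gdist {V' : Type*} (w' : V' → V' → ℕ∞) (u v : V') :
    ∃ p, ∃ _ : (u :: p).getLast (List.cons_ne_nil u p) = v, walkWeight w' u p = gdist w' u v := by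
  have hne : {x | ∃ p, ∃ _ : (u :: p).getLast (List.cons_ne_nil u p) = v,
      walkWeight w' u p = x}.Nonempty := ⟨walkWeight w' u [v], [v], by simp, rfl⟩
  obtain ⟨p, hp, hw⟩ := csInf_mem hne
  refine ⟨p, hp, ?_⟩
  rw [hw, gdist]
  apply le_antisymm
  · exact le_iInf fun p' => le_iInf fun h' => csInf_le (OrderBot.bddBelow _) ⟨p', h', rfl⟩
  · exact le_csInf hne (by rintro x ⟨p', h', rfl⟩; exact gdist_le w' p' h')

lemma gdist_triangle_edge {V' : Type*} (w' : V' → V' → ℕ∞) (u x v : V') :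
    gdist w' u v ≤ w' u x + gdist w' x v := by
  obtain ⟨p, hp, hw⟩ := exists_gdist w' x v
  rw [← hw]
  have h2 : ((u :: x :: p).getLast (List.cons_ne_nil _ _)) = v := by
    rw [List.getLast_cons (List.cons_ne_nil x p)]; exact hp
  simpa [walkWeight] using gdist_le w' (x :: p) h2

-- D: lower bound for inl-inl walks
lemma walk_inl_inl : ∀ (p : List (V ⊕ Bool)) (u v : V),
    (inl u :: p).getLast (List.cons_ne_nil _ p) = inl v →
    min (gdist w u v) (2 * (q : ℕ∞)) ≤ walkWeight (aug w q) (inl u) p := by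
  intro p
  induction p with
  | nil =>
    intro u v h
    simp only [List.getLast_singleton] at h
    obtain rfl := inl.inj h
    simp [walkWeight, gdist_self']
  | cons c cs ih =>
    intro u v hlast
    rw [List.getLast_cons (List.cons_ne_nil c cs)] at hlast
    cases c with
    | inl x =>
      have h1 : min (gdist w x v) (2 * (q : ℕ∞)) ≤ walkWeight (aug w q) (inl x) cs := by
        rcases eq_or_ne cs [] with rfl | hcs
        · simp only [List.getLast_singleton] at hlast
          obtain rfl := inl.inj hlast
          simp [walkWeight, gdist_self']
        · exact ih x v hlast
      show _ ≤ aug w q (inl u) (inl x) + walkWeight (aug w q) (inl x) cs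
      rcases le_total (gdist w x v) (2 * (q : ℕ∞)) with hle | hle
      · rw [min_eq_left hle] at h1
        calc min (gdist w u v) (2 * (q : ℕ∞)) ≤ gdist w u v := min_le_left _ _
          _ ≤ w u x + gdist w x v := gdist_triangle_edge w u x v
          _ ≤ aug w q (inl u) (inl x) + walkWeight (aug w q) (inl x) cs := add_le_add le_rfl h1
      · rw [min_eq_right hle] at h1
        calc min (gdist w u v) (2 * (q : ℕ∞)) ≤ 2 * (q : ℕ∞) := min_le_right _ _
          _ ≤ walkWeight (aug w q) (inl x) cs := h1
          _ ≤ _ := le_add_self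
    | inr b =>
      have hcs : cs ≠ [] := by
        rintro rfl
        simp only [List.getLast_singleton] at hlast
        exact absurd hlast (by simp)
      have h1 := walk_from_inr w q (b := b) hcs
      show _ ≤ aug w q (inl u) (inr b) + walkWeight (aug w q) (inr b) cs
      calc min (gdist w u v) (2 * (q : ℕ∞)) ≤ 2 * (q : ℕ∞) := min_le_right _ _
        _ = (q : ℕ∞) + q := two_mul _
        _ ≤ (q : ℕ∞) + walkWeight (aug w q) (inr b) cs := add_le_add le_rfl h1
        _ = _ := rfl

lemma walkWeight_map (p : List V) : ∀ u : V,
    walkWeight (aug w q) (inl u) (p.map inl) = walkWeight w u p := by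
  induction p with
  | nil => intro u; rfl
  | cons x xs ih => intro u; show aug w q (inl u) (inl x) + _ = _; rw [ih x]; rfl

lemma gdist_aug_le_gdist (u v : V) :
    gdist (aug w q) (inl u) (inl v) ≤ gdist w u v := by
  obtain ⟨p, hp, hw⟩ := exists_gdist w u v
  rw [← hw, ← walkWeight_map w q p u]
  apply gdist_le
  show ((u :: p).map inl).getLast (by simp) = inl v
  rw [List.getLast_map, hp]

lemma gdist_aug_inl_inl_le (u v : V) :
    gdist (aug w q) (inl u) (inl v) ≤ 2 * (q : ℕ∞) := by
  have h : ((inl u : V ⊕ Bool) :: [inr false, inl v]).getLast (List.cons_ne_nil _ _) = inl v := rfl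
  calc gdist (aug w q) (inl u) (inl v) ≤ walkWeight (aug w q) (inl u) [inr false, inl v] :=
        gdist_le _ _ h
    _ = (q : ℕ∞) + ((q : ℕ∞) + 0) := rfl
    _ = 2 * (q : ℕ∞) := by rw [add_zero, two_mul]

lemma gdist_aug_inl_inr (u : V) (b : Bool) :
    gdist (aug w q) (inl u) (inr b) = (q : ℕ∞) := by
  apply le_antisymm
  · have h : ((inl u : V ⊕ Bool) :: [inr b]).getLast (List.cons_ne_nil _ _) = inr b := rfl
    calc gdist (aug w q) (inl u) (inr b) ≤ walkWeight (aug w q) (inl u) [inr b] := gdist_le _ _ h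
      _ = (q : ℕ∞) + 0 := rfl
      _ = q := add_zero _
  · apply le_gdist
    intro p hp
    have hpne : p ≠ [] := by rintro rfl; exact absurd hp (by simp)
    exact walk_to_inr w q p _ hpne hp

lemma gdist_aug_inr_inl (b : Bool) (v : V) :
    gdist (aug w q) (inr b) (inl v) ≤ (q : ℕ∞) := by
  have h : ((inr b : V ⊕ Bool) :: [inl v]).getLast (List.cons_ne_nil _ _) = inl v := rfl
  calc gdist (aug w q) (inr b) (inl v) ≤ walkWeight (aug w q) (inr b) [inl v] := gdist_le _ _ h
    _ = (q : ℕ∞) + 0 := rfl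
    _ = q := add_zero _

lemma gdist_aug_inr_inr_le [Nonempty V] (b b' : Bool) :
    gdist (aug w q) (inr b) (inr b' : V ⊕ Bool) ≤ 2 * (q : ℕ∞) := by
  obtain ⟨v0⟩ := ‹Nonempty V›
  have h : ((inr b : V ⊕ Bool) :: [inl v0, inr b']).getLast (List.cons_ne_nil _ _) = inr b' := rfl
  calc gdist (aug w q) (inr b) (inr b') ≤ walkWeight (aug w q) (inr b) [inl v0, inr b'] :=
        gdist_le _ _ h
    _ = (q : ℕ∞) + ((q : ℕ∞) + 0) := rfl
    _ = 2 * (q : ℕ∞) := by rw [add_zero, two_mul]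

lemma gdist_aug_inl_inl (u v : V) :
    gdist (aug w q) (inl u) (inl v) = min (gdist w u v) (2 * (q : ℕ∞)) := by
  apply le_antisymm
  · exact le_min (gdist_aug_le_gdist w q u v) (gdist_aug_inl_inl_le w q u v)
  · exact le_gdist _ fun p hp => walk_inl_inl w q p u v hp

lemma ecc_aug_inr [Nonempty V] (b : Bool) :
    ecc (aug w q) (inr b : V ⊕ Bool) = 2 * (q : ℕ∞) := by
  apply le_antisymm
  · apply iSup_le
    intro t
    cases t with
    | inl v => calc gdist (aug w q) (inr b) (inl v) ≤ (q : ℕ∞) := gdist_aug_inr_inl w q b v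
        _ ≤ 2 * (q : ℕ∞) := by rw [two_mul]; exact le_self_add
    | inr b' => exact gdist_aug_inr_inr_le w q b b'
  · calc 2 * (q : ℕ∞) ≤ gdist (aug w q) (inr b) (inr (!b) : V ⊕ Bool) :=
        gdist_inr_inr_ge w q (by simp)
      _ ≤ ecc (aug w q) (inr b) := le_iSup _ (inr (!b))

lemma ecc_aug_inl (v : V) :
    ecc (aug w q) (inl v : V ⊕ Bool) = (q : ℕ∞) ⊔ (ecc w v ⊓ (2 * (q : ℕ∞))) := by
  rw [ecc, iSup_sum]
  have h1 : (⨆ u : V, gdist (aug w q) (inl v) (inl u)) = ecc w v ⊓ (2 * (q : ℕ∞)) := by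
    simp only [gdist_aug_inl_inl w q v]
    rw [ecc, iSup_inf_eq]
  have h2 : (⨆ b : Bool, gdist (aug w q) (inl v) (inr b)) = (q : ℕ∞) := by
    simp only [gdist_aug_inl_inr w q v]
    exact ciSup_const
  rw [h1, h2, sup_comm]


end Aux

theorem stmt4 {V : Type*} [Fintype V] [Nonempty V] (w : V → V → ℕ∞) (q : ℕ) (hq : 1 ≤ q) :
    ((2 * q : ℕ) : ℕ∞) ≤ rad w ↔
      ∀ p : V ⊕ Bool, ecc (aug w q) p = ((2 * q : ℕ) : ℕ∞) := by
  have hcast : ((2 * q : ℕ) : ℕ∞) = 2 * (q : ℕ∞) := by push_cast; ring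
  have hqlt : (q : ℕ∞) < 2 * (q : ℕ∞) := by
    rw [← Nat.cast_ofNat, ← Nat.cast_mul, Nat.cast_lt]
    omega
  rw [hcast]
  constructor
  · intro h p
    cases p with
    | inr b => exact ecc_aug_inr w q b
    | inl v =>
      rw [ecc_aug_inl]
      have hv : 2 * (q : ℕ∞) ≤ ecc w v := le_trans h (iInf_le _ v)
      rw [inf_eq_right.mpr hv, sup_eq_right.mpr hqlt.le]
  · intro h
    rw [rad]
    refine le_iInf fun v => ?_
    have hv := h (inl v)
    rw [ecc_aug_inl] at hv
    rcases le_total (2 * (q : ℕ∞)) (ecc w v) with hle | hle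
    · exact hle
    · rw [inf_eq_left.mpr hle] at hv
      rcases le_total (q : ℕ∞) (ecc w v) with h2 | h2
      · rw [sup_eq_right.mpr h2] at hv; exact hv.ge
      · rw [sup_eq_left.mpr h2] at hv; exact absurd hv hqlt.ne
end

section
/- Let V be a finite nonempty type, w : V → V → ℕ∞ with w u v ≥ 1 for all u ≠ v, S a decidable subset of V, and suppose r := rad_w < ⊤. Let w' be the radius-gadget graph on V ⊕ Unit. Then rad_{w'} = r if S contains a center of w (a vertex c ∈ S with ecc_w(c) = r), and rad_{w'} > r otherwise. In particular rad_{w'} = rad_w if and only if S contains a center of w. -/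
/-- Radius gadget on `V ⊕ Unit`: a dummy vertex `inr ()` with an incoming edge of weight `r`
from every vertex of `S` and no outgoing edges. -/
def radGadget {V : Type*} (w : V → V → ℕ∞) (S : Set V) [DecidablePred (· ∈ S)] (r : ℕ∞) :
    V ⊕ Unit → V ⊕ Unit → ℕ∞
  | Sum.inl u, Sum.inl v => w u v
  | Sum.inl s, Sum.inr _ => if s ∈ S then r else ⊤
  | Sum.inr _, _ => ⊤

private lemma enat_iInf_mem {ι : Sort*} [Nonempty ι] (f : ι → ℕ∞) : ∃ i, f i = ⨅ j, f j := by
  obtain ⟨x, ⟨i, rfl⟩, hmin⟩ := wellFounded_lt.has_min (Set.range f) (Set.range_nonempty f)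
  exact ⟨i, le_antisymm (le_iInf fun j => not_lt.mp (hmin _ ⟨j, rfl⟩)) (iInf_le _ _)⟩

section lemmas
variable {V : Type*} (w : V → V → ℕ∞)

lemma gdist_le_walk {u v : V} (p : List V) (h : (u :: p).getLast (List.cons_ne_nil u p) = v) :
    gdist w u v ≤ walkWeight w u p := iInf₂_le p h

lemma gdist_self (v : V) : gdist w v v = 0 :=
  le_antisymm (gdist_le_walk w [] rfl) zero_le

lemma gdist_spec (u v : V) : gdist w u v = ⊤ ∨
    ∃ p, ∃ h : (u :: p).getLast (List.cons_ne_nil u p) = v, walkWeight w u p = gdist w u v := by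
  by_cases hne : ∃ p, (u :: p).getLast (List.cons_ne_nil u p) = v
  · right
    have heq : gdist w u v = sInf {x | ∃ p, ∃ _ : (u :: p).getLast (List.cons_ne_nil u p) = v,
        walkWeight w u p = x} := by
      apply le_antisymm
      · exact le_sInf fun x ⟨p, h, hx⟩ => hx ▸ gdist_le_walk w p h
      · exact le_iInf₂ fun p h => sInf_le ⟨p, h, rfl⟩
    obtain ⟨p₀, hp₀⟩ := hne
    obtain ⟨p, h, hx⟩ := csInf_mem (s := {x | ∃ p, ∃ _ : (u :: p).getLast
        (List.cons_ne_nil u p) = v, walkWeight w u p = x}) ⟨_, p₀, hp₀, rfl⟩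
    exact ⟨p, h, heq ▸ hx⟩
  · left
    simp only [gdist]
    rw [iInf_eq_top]
    intro p
    rw [iInf_eq_top]
    push_neg at hne
    exact fun h => absurd h (hne p)

lemma gdist_triangle (u a v : V) : gdist w u v ≤ w u a + gdist w a v := by
  rcases gdist_spec w a v with h | ⟨p, h, hW⟩
  · simp [h]
  · rw [← hW]
    exact gdist_le_walk w (a :: p) (by rwa [List.getLast_cons (List.cons_ne_nil a p)])

lemma walk_pos (hpos : ∀ x y : V, x ≠ y → 1 ≤ w x y) :
    ∀ (p : List V) (u v : V), u ≠ v → (u :: p).getLast (List.cons_ne_nil u p) = v →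
      1 ≤ walkWeight w u p
  | [], u, v, huv, h => absurd h huv
  | a :: p, u, v, huv, h => by
    show 1 ≤ w u a + walkWeight w a p
    rw [List.getLast_cons (List.cons_ne_nil a p)] at h
    rcases eq_or_ne u a with rfl | hua
    · exact le_add_left (walk_pos hpos p u v huv h)
    · exact le_add_right (hpos u a hua)

lemma gdist_pos {u v : V} (hpos : ∀ x y : V, x ≠ y → 1 ≤ w x y) (huv : u ≠ v) :
    1 ≤ gdist w u v :=
  le_iInf₂ fun p h => walk_pos w hpos p u v huv h

lemma getLast_cons_concat {α : Type*} : ∀ (p : List α) (u z : α),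
    (u :: (p ++ [z])).getLast (List.cons_ne_nil _ _) = z
  | [], u, z => rfl
  | a :: p, u, z => by
    show (u :: a :: (p ++ [z])).getLast (List.cons_ne_nil _ _) = z
    rw [List.getLast_cons (List.cons_ne_nil a (p ++ [z]))]
    exact getLast_cons_concat p a z
end lemmas

section gadget
variable {V : Type*} (w : V → V → ℕ∞) (S : Set V) [DecidablePred (· ∈ S)] (r : ℕ∞)

lemma getLast_map_inl : ∀ (p : List V) (u : V),
    (Sum.inl u :: p.map (Sum.inl : V → V ⊕ Unit)).getLast (List.cons_ne_nil _ _) =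
      Sum.inl ((u :: p).getLast (List.cons_ne_nil u p))
  | [], _ => rfl
  | a :: p, u => by
    show (Sum.inl u :: Sum.inl a :: p.map (Sum.inl : V → V ⊕ Unit)).getLast
        (List.cons_ne_nil _ _) = Sum.inl ((u :: a :: p).getLast (List.cons_ne_nil _ _))
    rw [List.getLast_cons (List.cons_ne_nil (Sum.inl a) (p.map Sum.inl)),
      List.getLast_cons (List.cons_ne_nil a p)]
    exact getLast_map_inl p a

lemma walkWeight_map_inl : ∀ (p : List V) (u : V),
    walkWeight (radGadget w S r) (Sum.inl u) (p.map Sum.inl) = walkWeight w u p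
  | [], _ => rfl
  | a :: p, u => by
    show radGadget w S r (Sum.inl u) (Sum.inl a) + _ = w u a + _
    rw [walkWeight_map_inl p a]; rfl

lemma walkWeight_concat : ∀ (p : List V) (u z : V),
    walkWeight w u (p ++ [z]) = walkWeight w u p +
      w ((u :: p).getLast (List.cons_ne_nil u p)) z
  | [], u, z => by simp [walkWeight]
  | a :: p, u, z => by
    show w u a + walkWeight w a (p ++ [z]) = w u a + walkWeight w a p + _
    rw [walkWeight_concat p a z, List.getLast_cons (List.cons_ne_nil a p), add_assoc]

lemma gadget_walk_inl : ∀ (q : List (V ⊕ Unit)) (u v : V),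
    (Sum.inl u :: q).getLast (List.cons_ne_nil _ q) = Sum.inl v →
    gdist w u v ≤ walkWeight (radGadget w S r) (Sum.inl u) q := by
  intro q
  induction q with
  | nil =>
    intro u v h
    cases Sum.inl.inj h
    exact le_of_eq (gdist_self w u)
  | cons a q ih =>
    intro u v h
    rw [List.getLast_cons (List.cons_ne_nil a q)] at h
    match a with
    | Sum.inl u' =>
      calc gdist w u v ≤ w u u' + gdist w u' v := gdist_triangle w u u' v
        _ ≤ w u u' + walkWeight (radGadget w S r) (Sum.inl u') q :=
          add_le_add_right (ih u' v h) _
    | Sum.inr t =>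
      match q with
      | [] => simp at h
      | b :: q' =>
        show gdist w u v ≤ _ + (radGadget w S r (Sum.inr t) b + _)
        simp [radGadget]

lemma gadget_gdist_inl (u v : V) :
    gdist (radGadget w S r) (Sum.inl u) (Sum.inl v) = gdist w u v := by
  apply le_antisymm
  · apply le_iInf₂
    intro p h
    calc gdist (radGadget w S r) (Sum.inl u) (Sum.inl v)
        ≤ walkWeight (radGadget w S r) (Sum.inl u) (p.map Sum.inl) := by
          apply gdist_le_walk
          rw [getLast_map_inl, h]
      _ = walkWeight w u p := walkWeight_map_inl w S r p u
  · exact le_iInf₂ fun q h => gadget_walk_inl w S r q u v h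

lemma gadget_walk_inr [Nonempty V] : ∀ (q : List (V ⊕ Unit)) (u : V),
    (Sum.inl u :: q).getLast (List.cons_ne_nil _ q) = Sum.inr () →
    (⨅ s : V, (gdist w u s + if s ∈ S then r else ⊤)) ≤
      walkWeight (radGadget w S r) (Sum.inl u) q := by
  intro q
  induction q with
  | nil => intro u h; simp at h
  | cons a q ih =>
    intro u h
    rw [List.getLast_cons (List.cons_ne_nil a q)] at h
    match a with
    | Sum.inl u' =>
      obtain ⟨s₀, hs₀⟩ := enat_iInf_mem (fun s : V => gdist w u' s + if s ∈ S then r else ⊤)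
      calc (⨅ s : V, (gdist w u s + if s ∈ S then r else ⊤))
          ≤ gdist w u s₀ + if s₀ ∈ S then r else ⊤ := iInf_le _ s₀
        _ ≤ (w u u' + gdist w u' s₀) + if s₀ ∈ S then r else ⊤ :=
            add_le_add_left (gdist_triangle w u u' s₀) _
        _ = w u u' + (gdist w u' s₀ + if s₀ ∈ S then r else ⊤) := add_assoc _ _ _
        _ ≤ w u u' + walkWeight (radGadget w S r) (Sum.inl u') q := by
            rw [hs₀]; exact add_le_add_right (ih u' h) _
    | Sum.inr t =>
      match q with
      | [] =>
        calc (⨅ s : V, (gdist w u s + if s ∈ S then r else ⊤))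
            ≤ gdist w u u + if u ∈ S then r else ⊤ := iInf_le _ u
          _ = walkWeight (radGadget w S r) (Sum.inl u) [Sum.inr t] := by
              rw [gdist_self, zero_add]
              show _ = radGadget w S r (Sum.inl u) (Sum.inr t) + 0
              rw [add_zero]; rfl
      | b :: q' =>
        show _ ≤ _ + (radGadget w S r (Sum.inr t) b + _)
        simp [radGadget]

lemma gadget_gdist_inr [Nonempty V] (v : V) :
    gdist (radGadget w S r) (Sum.inl v) (Sum.inr ()) =
      ⨅ s : V, (gdist w v s + if s ∈ S then r else ⊤) := by
  apply le_antisymm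
  · apply le_iInf
    intro s
    rcases gdist_spec w v s with h | ⟨p, h, hW⟩
    · simp [h]
    · calc gdist (radGadget w S r) (Sum.inl v) (Sum.inr ())
          ≤ walkWeight (radGadget w S r) (Sum.inl v) (p.map Sum.inl ++ [Sum.inr ()]) := by
            apply gdist_le_walk
            exact getLast_cons_concat _ _ _
        _ = walkWeight (radGadget w S r) (Sum.inl v) (p.map Sum.inl) +
            radGadget w S r ((Sum.inl v :: p.map Sum.inl).getLast (List.cons_ne_nil _ _))
              (Sum.inr ()) := walkWeight_concat _ _ _ _
        _ = gdist w v s + if s ∈ S then r else ⊤ := by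
            rw [walkWeight_map_inl, ← hW]
            congr 1
            rw [getLast_map_inl, h]
            rfl
  · exact le_iInf₂ fun q h => gadget_walk_inr w S r q v h

lemma gadget_gdist_inr_src (t : Unit) (v : V) :
    gdist (radGadget w S r) (Sum.inr t) (Sum.inl v) = ⊤ := by
  rw [eq_top_iff]
  apply le_iInf₂
  intro q h
  match q with
  | [] => simp at h
  | b :: q' =>
    show (⊤ : ℕ∞) ≤ radGadget w S r (Sum.inr t) b + _
    simp [radGadget]

lemma gadget_ecc_inl [Nonempty V] (v : V) :
    ecc (radGadget w S r) (Sum.inl v) =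
      ecc w v ⊔ ⨅ s : V, (gdist w v s + if s ∈ S then r else ⊤) := by
  rw [ecc, iSup_sum]
  congr 1
  · simp only [gadget_gdist_inl]; rfl
  · rw [iSup_unique]
    exact gadget_gdist_inr w S r v

lemma gadget_ecc_inr [Nonempty V] (t : Unit) :
    ecc (radGadget w S r) (Sum.inr t) = ⊤ := by
  rw [eq_top_iff, ← gadget_gdist_inr_src w S r t (Classical.arbitrary V)]
  exact le_iSup _ (Sum.inl (Classical.arbitrary V))

lemma gadget_rad [Nonempty V] :
    rad (radGadget w S r) =
      ⨅ v : V, (ecc w v ⊔ ⨅ s : V, (gdist w v s + if s ∈ S then r else ⊤)) := by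
  rw [rad, iInf_sum]
  simp only [gadget_ecc_inl, gadget_ecc_inr, iInf_top, inf_top_eq]
end gadget

theorem stmt18 {V : Type*} [Fintype V] [Nonempty V]
    (w : V → V → ℕ∞) (hpos : ∀ u v : V, u ≠ v → 1 ≤ w u v)
    (S : Set V) [DecidablePred (· ∈ S)]
    (hr : rad w < ⊤) :
    ((∃ c ∈ S, ecc w c = rad w) → rad (radGadget w S (rad w)) = rad w) ∧
    (¬ (∃ c ∈ S, ecc w c = rad w) → rad w < rad (radGadget w S (rad w))) ∧
    (rad (radGadget w S (rad w)) = rad w ↔ ∃ c ∈ S, ecc w c = rad w) := by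
  have hradle : ∀ v : V, rad w ≤ ecc w v := fun v => iInf_le _ v
  have hrw := gadget_rad w S (rad w)
  have hlower : rad w ≤ rad (radGadget w S (rad w)) := by
    rw [hrw]
    exact le_iInf fun v => le_sup_of_le_left (hradle v)
  have h1 : (∃ c ∈ S, ecc w c = rad w) → rad (radGadget w S (rad w)) = rad w := by
    rintro ⟨c, hcS, hc⟩
    refine le_antisymm ?_ hlower
    rw [hrw]
    refine iInf_le_of_le c (sup_le hc.le ?_)
    refine iInf_le_of_le c ?_
    rw [gdist_self, zero_add, if_pos hcS]
  have h2 : ¬ (∃ c ∈ S, ecc w c = rad w) → rad w < rad (radGadget w S (rad w)) := by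
    intro hno
    rw [hrw]
    obtain ⟨v₀, hv₀⟩ := enat_iInf_mem
      (fun v : V => ecc w v ⊔ ⨅ s : V, (gdist w v s + if s ∈ S then rad w else ⊤))
    rw [← hv₀]
    rcases lt_or_eq_of_le (hradle v₀) with h | h
    · exact h.trans_le le_sup_left
    · apply lt_of_lt_of_le _ le_sup_right
      obtain ⟨s₀, hs₀⟩ := enat_iInf_mem (fun s : V => gdist w v₀ s + if s ∈ S then rad w else ⊤)
      rw [← hs₀]
      by_cases hsS : s₀ ∈ S
      · rw [if_pos hsS]
        have hvs : v₀ ≠ s₀ := by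
          rintro rfl
          exact hno ⟨v₀, hsS, h.symm⟩
        calc rad w < 1 + rad w := by
              rw [add_comm]; exact (ENat.lt_add_one_iff hr.ne).mpr le_rfl
          _ ≤ gdist w v₀ s₀ + rad w := add_le_add_left (gdist_pos w hpos hvs) _
      · rw [if_neg hsS, add_top]
        exact hr
  exact ⟨h1, h2, ⟨fun h => by_contra fun hc => absurd h (h2 hc).ne', h1⟩⟩
end
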